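/- Let B_θ, B_z, λ, α : (0,∞) → ℝ with B_θ, B_z C¹, and define B(x,y,z) = B_θ(r) e_θ + B_z(r) e_z and B_f⊥(x,y,z) = B_z(r) e_θ − B_θ(r) e_z on the region x²+y² > 0 of ℝ³. Then ∇×B = λ(r) B_f⊥ + α(r) B holds at every point of the region if and only if the ODE system dB_z/dr + α B_θ + λ B_z = 0 and dB_θ/dr + B_θ/r − α B_z + λ B_θ = 0 holds for every r > 0. -/

import Mathlib

open RealInnerProductSpace

/-- The curl `∇×V = (∂₂V₃ − ∂₃V₂, ∂₃V₁ − ∂₁V₃, ∂₁V₂ − ∂₂V₁)` of a vector field on ℝ³. -/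
noncomputable def curl3 (V : EuclideanSpace ℝ (Fin 3) → EuclideanSpace ℝ (Fin 3))
    (x : EuclideanSpace ℝ (Fin 3)) : EuclideanSpace ℝ (Fin 3) :=
  (EuclideanSpace.equiv (Fin 3) ℝ).symm
    ![fderiv ℝ V x (EuclideanSpace.single 1 1) 2 - fderiv ℝ V x (EuclideanSpace.single 2 1) 1,
      fderiv ℝ V x (EuclideanSpace.single 2 1) 0 - fderiv ℝ V x (EuclideanSpace.single 0 1) 2,
      fderiv ℝ V x (EuclideanSpace.single 0 1) 1 - fderiv ℝ V x (EuclideanSpace.single 1 1) 0]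

/-- The cylindrical radius `r = √(x² + y²)`. -/
noncomputable def rad (p : EuclideanSpace ℝ (Fin 3)) : ℝ := Real.sqrt (p 0 ^ 2 + p 1 ^ 2)

/-- The azimuthal unit vector `e_θ = (−y/r, x/r, 0)`. -/
noncomputable def etheta (p : EuclideanSpace ℝ (Fin 3)) : EuclideanSpace ℝ (Fin 3) :=
  (EuclideanSpace.equiv (Fin 3) ℝ).symm ![-(p 1) / rad p, p 0 / rad p, 0]

/-- The vertical unit vector `e_z = (0,0,1)`. -/
noncomputable def ez3 : EuclideanSpace ℝ (Fin 3) := EuclideanSpace.single 2 1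

set_option maxHeartbeats 1000000

local notation "E3" => EuclideanSpace ℝ (Fin 3)
local notation "pr" i => (EuclideanSpace.proj i : EuclideanSpace ℝ (Fin 3) →L[ℝ] ℝ)

open EuclideanSpace in
lemma hasFDerivAt_rad (p : E3) (hp : 0 < p 0 ^ 2 + p 1 ^ 2) :
    HasFDerivAt rad ((p 0 / rad p) • (pr 0) + (p 1 / rad p) • (pr 1)) p := by
  have hr : 0 < rad p := Real.sqrt_pos.mpr hp
  have h0 := (pr (0 : Fin 3)).hasFDerivAt (x := p)
  have h1 := (pr (1 : Fin 3)).hasFDerivAt (x := p)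
  have hq : HasFDerivAt (fun q : E3 => q 0 ^ 2 + q 1 ^ 2)
      ((2 * p 0) • (pr 0) + (2 * p 1) • (pr 1)) p := by
    have := (h0.mul h0).add (h1.mul h1)
    convert this using 1
    all_goals try rfl
    · ext q; simp [sq]
    · ext v
      simp [ContinuousLinearMap.add_apply, ContinuousLinearMap.smul_apply]
      ring
  have hsq := (Real.hasDerivAt_sqrt (ne_of_gt hp)).comp_hasFDerivAt p hq
  convert hsq using 1
  all_goals try rfl
  ext v
  simp [ContinuousLinearMap.add_apply, ContinuousLinearMap.smul_apply, rad, smul_add]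
  have : Real.sqrt (p 0 ^ 2 + p 1 ^ 2) ≠ 0 := ne_of_gt (by simpa [rad] using hr)
  field_simp

lemma main_curl (Bθ Bz Bθ' Bz' : ℝ → ℝ)
    (hBθ : ∀ r > (0:ℝ), HasDerivAt Bθ (Bθ' r) r)
    (hBz : ∀ r > (0:ℝ), HasDerivAt Bz (Bz' r) r)
    (B : E3 → E3)
    (hB : ∀ p, B p = Bθ (rad p) • etheta p + Bz (rad p) • ez3)
    (p : E3) (hp : 0 < p 0 ^ 2 + p 1 ^ 2) :
    curl3 B p = (EuclideanSpace.equiv (Fin 3) ℝ).symm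
      ![Bz' (rad p) * (p 1 / rad p), -(Bz' (rad p) * (p 0 / rad p)),
        Bθ' (rad p) + Bθ (rad p) / rad p] := by
  have hr : 0 < rad p := Real.sqrt_pos.mpr hp
  have hrne : rad p ≠ 0 := ne_of_gt hr
  have hr2 : rad p ^ 2 = p 0 ^ 2 + p 1 ^ 2 := Real.sq_sqrt hp.le
  have hR := hasFDerivAt_rad p hp
  set R : E3 →L[ℝ] ℝ := (p 0 / rad p) • (pr 0) + (p 1 / rad p) • (pr 1) with hRdef
  -- derivative of q ↦ Bθ (rad q), Bz (rad q), (rad q)⁻¹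
  have hBθr : HasFDerivAt (fun q : E3 => Bθ (rad q)) (Bθ' (rad p) • R) p :=
    (hBθ _ hr).comp_hasFDerivAt p hR
  have hBzr : HasFDerivAt (fun q : E3 => Bz (rad q)) (Bz' (rad p) • R) p :=
    (hBz _ hr).comp_hasFDerivAt p hR
  have hinv : HasFDerivAt (fun q : E3 => (rad q)⁻¹) ((-((rad p) ^ 2)⁻¹) • R) p :=
    (hasDerivAt_inv hrne).comp_hasFDerivAt p hR
  have h0 := (pr (0 : Fin 3)).hasFDerivAt (x := p)
  have h1 := (pr (1 : Fin 3)).hasFDerivAt (x := p)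
  -- component derivatives
  set x := p 0; set y := p 1; set r := rad p
  set L0 : E3 →L[ℝ] ℝ :=
    (-(Bθ' r) * x * y / r ^ 2 + Bθ r * x * y / r ^ 3) • (pr 0)
      + (-(Bθ' r) * y ^ 2 / r ^ 2 + Bθ r * y ^ 2 / r ^ 3 - Bθ r / r) • (pr 1) with hL0
  set L1 : E3 →L[ℝ] ℝ :=
    (Bθ' r * x ^ 2 / r ^ 2 + Bθ r / r - Bθ r * x ^ 2 / r ^ 3) • (pr 0)
      + (Bθ' r * x * y / r ^ 2 - Bθ r * x * y / r ^ 3) • (pr 1) with hL1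
  set L2 : E3 →L[ℝ] ℝ := (Bz' r * (x / r)) • (pr 0) + (Bz' r * (y / r)) • (pr 1) with hL2
  have hf0 : HasFDerivAt (fun q : E3 => Bθ (rad q) * (-(q 1) / rad q)) L0 p := by
    have := hBθr.mul ((h1.neg.mul hinv))
    simp only [div_eq_mul_inv]
    convert this using 1
    all_goals try rfl
    ext v
    simp [L0, R, ContinuousLinearMap.add_apply, ContinuousLinearMap.smul_apply, smul_add,
      div_eq_mul_inv]
    simp only [show rad p = r from rfl, show p 0 = x from rfl, show p 1 = y from rfl]
    field_simp
    ring
  have hf1 : HasFDerivAt (fun q : E3 => Bθ (rad q) * (q 0 / rad q)) L1 p := by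
    have := hBθr.mul ((h0.mul hinv))
    simp only [div_eq_mul_inv]
    convert this using 1
    all_goals try rfl
    ext v
    simp [L1, R, ContinuousLinearMap.add_apply, ContinuousLinearMap.smul_apply, smul_add,
      div_eq_mul_inv]
    simp only [show rad p = r from rfl, show p 0 = x from rfl, show p 1 = y from rfl]
    field_simp
    ring
  have hf2 : HasFDerivAt (fun q : E3 => Bz (rad q)) L2 p := by
    convert hBzr using 1
    ext v
    simp [L2, R, ContinuousLinearMap.add_apply, ContinuousLinearMap.smul_apply, smul_add]
    ring
  -- assemble the full derivative
  set F : Fin 3 → E3 → ℝ :=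
    ![fun q => Bθ (rad q) * (-(q 1) / rad q), fun q => Bθ (rad q) * (q 0 / rad q),
      fun q => Bz (rad q)] with hF
  set F' : Fin 3 → (E3 →L[ℝ] ℝ) := ![L0, L1, L2] with hF'
  have hpi : HasFDerivAt (fun q (i : Fin 3) => F i q) (ContinuousLinearMap.pi F') p := by
    apply hasFDerivAt_pi.mpr
    intro i
    fin_cases i
    · simpa [F, F'] using hf0
    · simpa [F, F'] using hf1
    · simpa [F, F'] using hf2
  have hBeq : B = ⇑((PiLp.continuousLinearEquiv 2 ℝ (fun _ : Fin 3 => ℝ)).symm.toContinuousLinearMap)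
      ∘ (fun q (i : Fin 3) => F i q) := by
    funext q
    apply PiLp.ext
    intro i
    show B q i = F i q
    fin_cases i <;>
      simp [hB, F, etheta, ez3, PiLp.add_apply, PiLp.smul_apply, smul_eq_mul,
        EuclideanSpace.single_apply]
  have hBd : HasFDerivAt B
      (((PiLp.continuousLinearEquiv 2 ℝ (fun _ : Fin 3 => ℝ)).symm.toContinuousLinearMap).comp
        (ContinuousLinearMap.pi F')) p := by
    rw [hBeq]
    exact ((PiLp.continuousLinearEquiv 2 ℝ
      (fun _ : Fin 3 => ℝ)).symm.toContinuousLinearMap.hasFDerivAt).comp p hpi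
  have hfd := hBd.fderiv
  have hev : ∀ (j i : Fin 3), fderiv ℝ B p (EuclideanSpace.single j 1) i
      = F' i (EuclideanSpace.single j 1) := by
    intro j i
    rw [hfd]
    rfl
  apply PiLp.ext
  intro i
  show curl3 B p i = _
  have e10 : (EuclideanSpace.single (1:Fin 3) (1:ℝ)) 0 = 0 := by
    simp [EuclideanSpace.single_apply]
  fin_cases i
  · show fderiv ℝ B p (EuclideanSpace.single 1 1) 2 - fderiv ℝ B p (EuclideanSpace.single 2 1) 1 = _
    rw [hev, hev]
    simp [F', L1, L2, ContinuousLinearMap.add_apply, ContinuousLinearMap.smul_apply,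
      EuclideanSpace.single_apply]
  · show fderiv ℝ B p (EuclideanSpace.single 2 1) 0 - fderiv ℝ B p (EuclideanSpace.single 0 1) 2 = _
    rw [hev, hev]
    simp [F', L0, L2, ContinuousLinearMap.add_apply, ContinuousLinearMap.smul_apply,
      EuclideanSpace.single_apply]
  · show fderiv ℝ B p (EuclideanSpace.single 0 1) 1 - fderiv ℝ B p (EuclideanSpace.single 1 1) 0 = _
    rw [hev, hev]
    simp [F', L0, L1, ContinuousLinearMap.add_apply, ContinuousLinearMap.smul_apply,
      EuclideanSpace.single_apply]
    field_simp
    linear_combination (Bθ r - Bθ' r * r) * hr2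

/-- for `B = B_θ(r)e_θ + B_z(r)e_z` and `B_f⊥ = B_z(r)e_θ − B_θ(r)e_z`,
the decomposition `∇×B = λ(r) B_f⊥ + α(r) B` holds on the region `x² + y² > 0` iff the
ODE system `B_z' + αB_θ + λB_z = 0`, `B_θ' + B_θ/r − αB_z + λB_θ = 0` holds for all `r > 0`. -/
theorem stmt_13 (Bθ Bz Bθ' Bz' lam alp : ℝ → ℝ)
    (hBθ : ∀ r > (0:ℝ), HasDerivAt Bθ (Bθ' r) r)
    (hBz : ∀ r > (0:ℝ), HasDerivAt Bz (Bz' r) r)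
    (B Bf : EuclideanSpace ℝ (Fin 3) → EuclideanSpace ℝ (Fin 3))
    (hB : ∀ p, B p = Bθ (rad p) • etheta p + Bz (rad p) • ez3)
    (hBf : ∀ p, Bf p = Bz (rad p) • etheta p - Bθ (rad p) • ez3) :
    (∀ p : EuclideanSpace ℝ (Fin 3), 0 < p 0 ^ 2 + p 1 ^ 2 →
        curl3 B p = lam (rad p) • Bf p + alp (rad p) • B p) ↔
    (∀ r > (0:ℝ), Bz' r + alp r * Bθ r + lam r * Bz r = 0 ∧
        Bθ' r + Bθ r / r - alp r * Bz r + lam r * Bθ r = 0) := by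
  constructor
  · intro h r hr
    set p : E3 := (EuclideanSpace.equiv (Fin 3) ℝ).symm ![r, 0, 0] with hpdef
    have hp0 : p 0 = r := rfl
    have hp1 : p 1 = (0:ℝ) := rfl
    have hp : 0 < p 0 ^ 2 + p 1 ^ 2 := by rw [hp0, hp1]; positivity
    have hradp : rad p = r := by
      rw [rad, hp0, hp1]
      simpa using Real.sqrt_sq hr.le
    have heq := (main_curl Bθ Bz Bθ' Bz' hBθ hBz B hB p hp).symm.trans (h p hp)
    have c1 := congrArg (fun v : E3 => v 1) heq
    have c2 := congrArg (fun v : E3 => v 2) heq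
    simp only [hBf p, hB p, hradp, hp0, hp1] at c1 c2
    have hrr : r / r = 1 := div_self hr.ne'
    simp [etheta, ez3, PiLp.add_apply, PiLp.sub_apply, PiLp.smul_apply, smul_eq_mul,
      EuclideanSpace.single_apply, hradp, hp0, hp1, hrr] at c1 c2
    constructor
    · linear_combination -c1
    · linear_combination c2
  · intro h p hp
    have hr : 0 < rad p := Real.sqrt_pos.mpr hp
    obtain ⟨e1, e2⟩ := h (rad p) hr
    rw [main_curl Bθ Bz Bθ' Bz' hBθ hBz B hB p hp]
    apply PiLp.ext
    intro i
    fin_cases i <;>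
      simp [hBf p, hB p, etheta, ez3, PiLp.add_apply, PiLp.sub_apply, PiLp.smul_apply,
        smul_eq_mul, EuclideanSpace.single_apply]
    · linear_combination (p 1 / rad p) * e1
    · linear_combination -(p 0 / rad p) * e1
    · linear_combination e2
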